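/- Let a Darboux system u^I_{x_i} = F^I_i(x; U^I_i) in n variables be given, and fix ℓ ∈ {1,…,n-1}. Define system ℓ by taking, for each I ∈ 𝓘 with ℓ ∈ I ≠ (ℓ) and each i ∈ I∖ℓ, the equation u^{ℓ,I}_{x_i}(x'^ℓ) = F^I_i(x'^ℓ_0; [ū^{(ℓ)}(x'^ℓ)], U^{ℓ,I}_i(x'^ℓ)) obtained by restriction to the hyperplane {x_ℓ = 0} (with any occurrence of u^{(ℓ)} replaced by the data function ū^{(ℓ)}). Then system ℓ is again a closed Darboux system in the n−1 independent variables x'^ℓ: every unknown appearing on a right-hand side is differentiated in some equation of system ℓ, and the integrability conditions for system ℓ hold identically as a consequence of the integrability conditions of the original system restricted to {x_ℓ = 0}. -/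

import Mathlib

open Set Function

/-- The substitution used in forming the restricted "system ℓ": unknowns that survive
the restriction to `{x_ℓ = 0}` (those `m` with `ℓ ∈ P m ≠ {ℓ}`) keep their value,
while the unknown with pattern `{ℓ}` (and only it, up to irrelevant junk coordinates)
is replaced by its data function evaluated on the hyperplane. -/
noncomputable def darbouxSubst (n : ℕ) (κ : Type) (P : κ → Finset (Fin n))
    (ubar : κ → (Fin n → ℝ) → ℝ) (ℓ : Fin n)
    (x : Fin n → ℝ) (V : κ → ℝ) : κ → ℝ :=
  fun m => if ℓ ∈ P m ∧ P m ≠ {ℓ} then V m else ubar m (Function.update x ℓ 0)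

/-- The right-hand sides of the restricted "system ℓ". -/
noncomputable def darbouxRestrictRHS (n : ℕ) (κ : Type) (P : κ → Finset (Fin n))
    (F : κ → Fin n → (Fin n → ℝ) → (κ → ℝ) → ℝ)
    (ubar : κ → (Fin n → ℝ) → ℝ) (ℓ : Fin n)
    (k : κ) (i : Fin n) (x : Fin n → ℝ) (V : κ → ℝ) : ℝ :=
  F k i (Function.update x ℓ 0) (darbouxSubst n κ P ubar ℓ x V)

/-- Claim 5.1 in the proof of Darboux's theorem: restricting a Darboux system to the
hyperplane `{x_ℓ = 0}` (substituting the data for the unknown with pattern `{ℓ}`)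
again yields a closed Darboux system in the remaining `n-1` variables: (1) every
unknown appearing on a right-hand side of system ℓ is differentiated in system ℓ;
(2) each restricted right-hand side depends only on the unknowns `u^{ℓ,K}` with
`K ⊇ I∖i`; (3) the integrability conditions for system ℓ hold identically, as a
consequence of those of the original system restricted to `{x_ℓ = 0}`. -/
theorem darboux_restricted_system_is_darboux (n : ℕ) (κ : Type) [Fintype κ]
    (P : κ → Finset (Fin n)) (hP : ∀ k, (P k).Nonempty)
    (F : κ → Fin n → (Fin n → ℝ) → (κ → ℝ) → ℝ)
    (ubar : κ → (Fin n → ℝ) → ℝ)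
    (s : Set ((Fin n → ℝ) × (κ → ℝ))) (hs : IsOpen s)
    (hbase : ((0 : Fin n → ℝ), fun k => ubar k 0) ∈ s)
    (s0 : Set (Fin n → ℝ)) (hs0 : IsOpen s0) (h0s0 : (0 : Fin n → ℝ) ∈ s0)
    (hubar : ∀ k, ContDiffOn ℝ 2 (ubar k) s0)
    (hFsm : ∀ k, ∀ i ∈ P k,
      ContDiffOn ℝ 2 (fun p : (Fin n → ℝ) × (κ → ℝ) => F k i p.1 p.2) s)
    (hdep : ∀ k, ∀ i ∈ P k, ∀ x U V,
      (∀ m, P k \ {i} ⊆ P m → U m = V m) → F k i x U = F k i x V)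
    (hint : ∀ k, ∀ i ∈ P k, ∀ j ∈ P k, i ≠ j → ∀ p ∈ s,
      fderiv ℝ (fun q : (Fin n → ℝ) × (κ → ℝ) => F k i q.1 q.2) p
        ((Pi.single j 1 : Fin n → ℝ), fun m => F m j p.1 p.2)
      = fderiv ℝ (fun q : (Fin n → ℝ) × (κ → ℝ) => F k j q.1 q.2) p
        ((Pi.single i 1 : Fin n → ℝ), fun m => F m i p.1 p.2))
    (ℓ : Fin n) :
    -- (1) system ℓ is closed
    (∀ k, ℓ ∈ P k → P k ≠ {ℓ} → ∀ i ∈ P k, i ≠ ℓ →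
      ∀ m, P k \ {i} ⊆ P m → P m ≠ {ℓ} →
        ℓ ∈ P m ∧ P m ≠ {ℓ} ∧ ∃ i' ∈ P m, i' ≠ ℓ) ∧
    -- (2) each restricted right-hand side depends only on the unknowns it should
    (∀ k, ℓ ∈ P k → P k ≠ {ℓ} → ∀ i ∈ P k, i ≠ ℓ → ∀ x V W,
      (∀ m, ℓ ∈ P m → P m ≠ {ℓ} → P k \ {i} ⊆ P m → V m = W m) →
      darbouxRestrictRHS n κ P F ubar ℓ k i x V
        = darbouxRestrictRHS n κ P F ubar ℓ k i x W) ∧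
    -- (3) the integrability conditions for system ℓ hold identically
    (∀ k, ℓ ∈ P k → ∀ i ∈ P k, ∀ j ∈ P k, i ≠ j → i ≠ ℓ → j ≠ ℓ →
      ∀ (x : Fin n → ℝ) (V : κ → ℝ), x ℓ = 0 →
        (x, darbouxSubst n κ P ubar ℓ x V) ∈ s → x ∈ s0 →
        fderiv ℝ (fun q : (Fin n → ℝ) × (κ → ℝ) =>
            darbouxRestrictRHS n κ P F ubar ℓ k i q.1 q.2) (x, V)
          ((Pi.single j 1 : Fin n → ℝ),
            fun m => darbouxRestrictRHS n κ P F ubar ℓ m j x V)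
        = fderiv ℝ (fun q : (Fin n → ℝ) × (κ → ℝ) =>
            darbouxRestrictRHS n κ P F ubar ℓ k j q.1 q.2) (x, V)
          ((Pi.single i 1 : Fin n → ℝ),
            fun m => darbouxRestrictRHS n κ P F ubar ℓ m i x V)) := by
  constructor
  · -- (1) closedness
    intro k hlk hkne i hik hil m hsub hmne
    have hlm : ℓ ∈ P m := hsub (Finset.mem_sdiff.mpr ⟨hlk, by simp [Ne.symm hil]⟩)
    refine ⟨hlm, hmne, ?_⟩
    by_contra h
    push_neg at h
    exact hmne (Finset.eq_singleton_iff_unique_mem.mpr ⟨hlm, h⟩)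
  constructor
  · -- (2) dependence
    intro k hlk hkne i hik hil x V W hVW
    unfold darbouxRestrictRHS
    apply hdep k i hik
    intro m hm
    unfold darbouxSubst
    by_cases hc : ℓ ∈ P m ∧ P m ≠ {ℓ}
    · simp only [if_pos hc]
      exact hVW m hc.1 hc.2 hm
    · simp only [if_neg hc]
  · -- (3) integrability
    intro k hlk i hik j hjk hij hil hjl x V hxl hps hxs0
    set p : (Fin n → ℝ) × (κ → ℝ) := (x, darbouxSubst n κ P ubar ℓ x V) with hp
    -- the linear map "set coordinate ℓ to 0"
    set L : (Fin n → ℝ) →L[ℝ] (Fin n → ℝ) :=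
      ContinuousLinearMap.pi (fun t : Fin n =>
        if t = ℓ then 0 else ContinuousLinearMap.proj t) with hLdef
    have hL : ∀ y : Fin n → ℝ, L y = Function.update y ℓ 0 := by
      intro y
      funext t
      simp only [hLdef, ContinuousLinearMap.pi_apply, Function.update_apply]
      by_cases ht : t = ℓ <;> simp [ht]
    have hLx : L x = x := by
      funext t
      rw [hL, Function.update_apply]
      by_cases ht : t = ℓ <;> simp [ht, hxl]
    have hux : Function.update x ℓ 0 = x := by rw [← hL, hLx]
    -- derivative of the substitution map
    set B : ((Fin n → ℝ) × (κ → ℝ)) →L[ℝ] (κ → ℝ) :=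
      ContinuousLinearMap.pi (fun m =>
        if ℓ ∈ P m ∧ P m ≠ {ℓ} then
          (ContinuousLinearMap.proj m).comp (ContinuousLinearMap.snd ℝ (Fin n → ℝ) (κ → ℝ))
        else (fderiv ℝ (ubar m) x).comp
          (L.comp (ContinuousLinearMap.fst ℝ (Fin n → ℝ) (κ → ℝ)))) with hBdef
    have hPsi : HasFDerivAt
        (fun q : (Fin n → ℝ) × (κ → ℝ) => darbouxSubst n κ P ubar ℓ q.1 q.2) B (x, V) := by
      rw [hasFDerivAt_pi']
      intro m
      rw [hBdef, ContinuousLinearMap.proj_pi]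
      by_cases hc : ℓ ∈ P m ∧ P m ≠ {ℓ}
      · simp only [darbouxSubst, if_pos hc]
        exact ((ContinuousLinearMap.proj m).comp
          (ContinuousLinearMap.snd ℝ (Fin n → ℝ) (κ → ℝ))).hasFDerivAt
      · simp only [darbouxSubst, if_neg hc]
        have h1 : HasFDerivAt (ubar m) (fderiv ℝ (ubar m) x) x :=
          (((hubar m).contDiffAt (hs0.mem_nhds hxs0)).differentiableAt
            two_ne_zero).hasFDerivAt
        have h2 : HasFDerivAt (fun q : (Fin n → ℝ) × (κ → ℝ) => L q.1)
            (L.comp (ContinuousLinearMap.fst ℝ (Fin n → ℝ) (κ → ℝ))) (x, V) :=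
          (L.comp (ContinuousLinearMap.fst ℝ (Fin n → ℝ) (κ → ℝ))).hasFDerivAt
        have h1' : HasFDerivAt (ubar m) (fderiv ℝ (ubar m) x) (L (x, V).1) := by
          rw [hLx]; exact h1
        have := h1'.comp (x, V) h2
        simpa only [Function.comp_def, hL] using this
    have hPhi : HasFDerivAt
        (fun q : (Fin n → ℝ) × (κ → ℝ) =>
          ((L q.1, darbouxSubst n κ P ubar ℓ q.1 q.2) : (Fin n → ℝ) × (κ → ℝ)))
        ((L.comp (ContinuousLinearMap.fst ℝ (Fin n → ℝ) (κ → ℝ))).prod B) (x, V) :=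
      HasFDerivAt.prodMk ((L.comp (ContinuousLinearMap.fst ℝ (Fin n → ℝ) (κ → ℝ))).hasFDerivAt) hPsi
    -- differentiability of the F's at p
    have hFd : ∀ m, ∀ i' ∈ P m, HasFDerivAt
        (fun q : (Fin n → ℝ) × (κ → ℝ) => F m i' q.1 q.2)
        (fderiv ℝ (fun q : (Fin n → ℝ) × (κ → ℝ) => F m i' q.1 q.2) p) p := fun m i' h =>
      (((hFsm m i' h).contDiffAt (hs.mem_nhds hps)).differentiableAt
        two_ne_zero).hasFDerivAt
    -- key: the fderiv of F k a at p only sees relevant unknown-directions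
    have key : ∀ a, a ∈ P k → ∀ (v : Fin n → ℝ) (W W' : κ → ℝ),
        (∀ m, P k \ {a} ⊆ P m → W m = W' m) →
        fderiv ℝ (fun q : (Fin n → ℝ) × (κ → ℝ) => F k a q.1 q.2) p (v, W)
          = fderiv ℝ (fun q : (Fin n → ℝ) × (κ → ℝ) => F k a q.1 q.2) p (v, W') := by
      intro a ha v W W' hWW
      set DF := fderiv ℝ (fun q : (Fin n → ℝ) × (κ → ℝ) => F k a q.1 q.2) p with hDF
      have hzero : DF ((0 : Fin n → ℝ), W - W') = 0 := by
        have hg : ∀ t : ℝ, F k a p.1 (p.2 + t • (W - W')) = F k a p.1 p.2 := by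
          intro t
          apply hdep k a ha
          intro m hm
          have : W m = W' m := hWW m hm
          simp [Pi.add_apply, Pi.smul_apply, Pi.sub_apply, this]
        have hγ : HasDerivAt (fun t : ℝ =>
            ((p.1, p.2 + t • (W - W')) : (Fin n → ℝ) × (κ → ℝ)))
            (((0 : Fin n → ℝ), W - W')) 0 := by
          apply HasDerivAt.prodMk
          · exact hasDerivAt_const 0 p.1
          · have : HasDerivAt (fun t : ℝ => t • (W - W')) ((1:ℝ) • (W - W')) 0 :=
              (hasDerivAt_id 0).smul_const (W - W')
            simpa using (this.const_add p.2)
        have hγ0 : ((p.1, p.2 + (0:ℝ) • (W - W')) : (Fin n → ℝ) × (κ → ℝ)) = p := by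
          simp
        have hc1 : HasDerivAt (fun t : ℝ => F k a p.1 (p.2 + t • (W - W')))
            (DF ((0 : Fin n → ℝ), W - W')) 0 := by
          have hF' : HasFDerivAt (fun q : (Fin n → ℝ) × (κ → ℝ) => F k a q.1 q.2) DF
              ((p.1, p.2 + (0:ℝ) • (W - W')) : (Fin n → ℝ) × (κ → ℝ)) := by
            rw [hγ0]; exact hFd k a ha
          exact hF'.comp_hasDerivAt 0 hγ
        have hc2 : HasDerivAt (fun t : ℝ => F k a p.1 (p.2 + t • (W - W'))) 0 0 := by
          have : (fun t : ℝ => F k a p.1 (p.2 + t • (W - W'))) =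
              fun _ : ℝ => F k a p.1 p.2 := funext hg
          rw [this]; exact hasDerivAt_const 0 _
        exact hc1.unique hc2
      have hsplit : ((v, W) : (Fin n → ℝ) × (κ → ℝ))
          = (v, W') + ((0 : Fin n → ℝ), W - W') := by
        ext <;> simp
      rw [hsplit, map_add, hzero, add_zero]
    -- main computation of each side
    have main : ∀ a, a ∈ P k → a ≠ ℓ → ∀ b, b ∈ P k → b ≠ a → b ≠ ℓ →
        fderiv ℝ (fun q : (Fin n → ℝ) × (κ → ℝ) =>
            darbouxRestrictRHS n κ P F ubar ℓ k a q.1 q.2) (x, V)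
          ((Pi.single b 1 : Fin n → ℝ),
            fun m => darbouxRestrictRHS n κ P F ubar ℓ m b x V)
        = fderiv ℝ (fun q : (Fin n → ℝ) × (κ → ℝ) => F k a q.1 q.2) p
          ((Pi.single b 1 : Fin n → ℝ),
            fun m => F m b p.1 p.2) := by
      intro a ha hal b hb hba hbl
      set DF := fderiv ℝ (fun q : (Fin n → ℝ) × (κ → ℝ) => F k a q.1 q.2) p with hDF
      have hFa' : HasFDerivAt (fun q : (Fin n → ℝ) × (κ → ℝ) => F k a q.1 q.2) DF
          ((L x, darbouxSubst n κ P ubar ℓ x V) : (Fin n → ℝ) × (κ → ℝ)) := by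
        rw [hLx]; exact hFd k a ha
      have hcomp := hFa'.comp (x, V) hPhi
      have hcomp' : HasFDerivAt
          (fun q : (Fin n → ℝ) × (κ → ℝ) => darbouxRestrictRHS n κ P F ubar ℓ k a q.1 q.2)
          (DF.comp ((L.comp (ContinuousLinearMap.fst ℝ (Fin n → ℝ) (κ → ℝ))).prod B)) (x, V) := by
        simpa only [Function.comp_def, darbouxRestrictRHS, hL] using hcomp
      rw [hcomp'.fderiv]
      have hLb : L (Pi.single b 1) = Pi.single b 1 := by
        funext t
        rw [hL, Function.update_apply]
        by_cases ht : t = ℓ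
        · subst ht
          rw [if_pos rfl, Pi.single_apply, if_neg (Ne.symm hbl)]
        · rw [if_neg ht]
      simp only [ContinuousLinearMap.coe_comp', Function.comp_apply,
        ContinuousLinearMap.prod_apply, ContinuousLinearMap.coe_fst',
        ContinuousLinearMap.coe_comp']
      rw [show (L ((Pi.single b 1 : Fin n → ℝ),
          fun m => darbouxRestrictRHS n κ P F ubar ℓ m b x V).1) = Pi.single b 1 from hLb]
      apply key a ha
      intro m hm
      have hlm : ℓ ∈ P m := hm (Finset.mem_sdiff.mpr ⟨hlk, by
        simp only [Finset.mem_singleton]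
        intro h; exact hal h.symm⟩)
      by_cases hc : ℓ ∈ P m ∧ P m ≠ {ℓ}
      · rw [hBdef]
        simp only [ContinuousLinearMap.pi_apply, if_pos hc,
          ContinuousLinearMap.coe_comp', Function.comp_apply,
          ContinuousLinearMap.coe_snd']
        show darbouxRestrictRHS n κ P F ubar ℓ m b x V = F m b p.1 p.2
        rw [darbouxRestrictRHS, hux]
      · exfalso
        push_neg at hc
        have hmeq : P m = {ℓ} := hc hlm
        have hbm : b ∈ P m := hm (Finset.mem_sdiff.mpr ⟨hb, by
          simp only [Finset.mem_singleton]; exact hba⟩)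
        rw [hmeq, Finset.mem_singleton] at hbm
        exact hbl hbm
    rw [main i hik hil j hjk (Ne.symm hij) hjl, main j hjk hjl i hik hij hil]
    exact hint k i hik j hjk hij p hps
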